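/- Let Λ be a σ-finite measure on 𝒫 satisfying conditions (1.4) and (1.5), and let z ∈ ℂ with Re z = θ. Then ∫_𝒫 ( |e^{z x₁} − 1 − z x₁ 1_{|x₁|<1}| + Σ_{k≥2} e^{θ x_k} ) Λ(dx) < ∞, where by convention e^{z x₁} = 0 and the term x₁ 1_{|x₁|<1} is 0 when x₁ = −∞. In particular, for σ² ≥ 0 and a ∈ ℝ, the cumulant κ(z) = ½σ²z² + a z + ∫_𝒫 ( e^{z x₁} − 1 − z x₁ 1_{|x₁|<1} + Σ_{k≥2} e^{z x_k} ) Λ(dx) is well defined and finite. -/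

import Mathlib

open MeasureTheory ENNReal Filter

noncomputable section

/-- The space `𝒫` of nonincreasing sequences in `[-∞, ∞)` tending to `-∞`,
equipped (as a subtype of `ℕ → EReal`) with the σ-algebra generated by the coordinate maps. -/
def calP : Set (ℕ → EReal) :=
  {x | Antitone x ∧ (∀ n, x n ≠ ⊤) ∧ Tendsto x atTop (nhds ⊥)}

/-- `e^{θ y}`, with the convention that it is `0` when `y = -∞`, even for `θ = 0`. -/
def eexp (θ : ℝ) (y : EReal) : ℝ≥0∞ :=
  if y = ⊥ then 0 else ENNReal.ofReal (Real.exp (θ * y.toReal))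

/-- `⟨x, e_θ⟩ = Σ_{n ≥ 1} e^{θ x_n}` (the sequence is indexed from `0` in Lean). -/
def ip (θ : ℝ) (x : ℕ → EReal) : ℝ≥0∞ := ∑' n, eexp θ (x n)

/-- Condition (1.4): `∫ (1 ∧ x₁²) Λ(dx) < ∞`, with `1 ∧ x₁² = 1` when `x₁ = -∞`. -/
def cond14 (Λ : Measure calP) : Prop :=
  ∫⁻ x : calP, (if x.1 0 = ⊥ then 1
    else 1 ⊓ ENNReal.ofReal ((x.1 0).toReal ^ 2)) ∂Λ < ∞

/-- Condition (1.5): `∫ (1_{x₁>1} e^{θ x₁} + Σ_{k≥2} e^{θ x_k}) Λ(dx) < ∞`. -/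
def cond15 (θ : ℝ) (Λ : Measure calP) : Prop :=
  ∫⁻ x : calP, ((if (1 : EReal) < x.1 0 then eexp θ (x.1 0) else 0)
    + ∑' k, eexp θ (x.1 (k + 1))) ∂Λ < ∞

/-- `y ↦ e^{z y}` for complex `z`, with the convention `e^{z⋅(-∞)} = 0`. -/
def cexpE (z : ℂ) (y : EReal) : ℂ :=
  if y = ⊥ then 0 else Complex.exp (z * (y.toReal : ℂ))

/-- `y ↦ y 1_{|y| < 1}`, with the convention that the term is `0` when `y = -∞`. -/
def xIn (y : EReal) : ℝ := if y ≠ ⊥ ∧ |y.toReal| < 1 then y.toReal else 0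

namespace Stmt9Aux

lemma norm_cexp (z : ℂ) (t : ℝ) : ‖Complex.exp (z * (t : ℂ))‖ = Real.exp (z.re * t) := by
  rw [Complex.norm_exp]
  norm_num [Complex.mul_re]

lemma eexp_eq_ofReal_norm {θ : ℝ} {z : ℂ} (hz : z.re = θ) (y : EReal) :
    eexp θ y = ENNReal.ofReal ‖cexpE z y‖ := by
  by_cases h : y = ⊥
  · simp [eexp, cexpE, h]
  · rw [eexp, cexpE, if_neg h, if_neg h, norm_cexp, hz]

lemma measurable_eexp (θ : ℝ) : Measurable (eexp θ) := by
  unfold eexp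
  refine Measurable.ite ?_ measurable_const ?_
  · exact measurableSet_singleton (⊥ : EReal)
  · exact ENNReal.measurable_ofReal.comp
      (Real.measurable_exp.comp (measurable_ereal_toReal.const_mul θ))

lemma measurable_cexpE (z : ℂ) : Measurable (cexpE z) := by
  unfold cexpE
  refine Measurable.ite ?_ measurable_const ?_
  · exact measurableSet_singleton (⊥ : EReal)
  · exact Complex.measurable_exp.comp
      ((Complex.measurable_ofReal.comp measurable_ereal_toReal).const_mul z)

lemma measurable_xIn : Measurable xIn := by
  unfold xIn
  refine Measurable.ite ?_ measurable_ereal_toReal measurable_const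
  have h1 : MeasurableSet {y : EReal | y ≠ ⊥} := (measurableSet_singleton (⊥ : EReal)).compl
  have h2 : MeasurableSet {y : EReal | |y.toReal| < 1} :=
    measurableSet_lt measurable_ereal_toReal.abs measurable_const
  exact h1.inter h2

/-- The constant used in the pointwise bound. -/
def Cb (θ : ℝ) (z : ℂ) : ℝ :=
  (Real.exp ‖z‖ + 2 + ‖z‖) * (‖z‖ ^ 2 + 1) + Real.exp θ + 2

lemma key {θ : ℝ} (hθ : 0 ≤ θ) {z : ℂ} (hz : z.re = θ) (y : EReal) :
    ENNReal.ofReal ‖cexpE z y - 1 - z * (xIn y : ℂ)‖ ≤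
      ENNReal.ofReal (Cb θ z) * (if y = ⊥ then 1 else 1 ⊓ ENNReal.ofReal (y.toReal ^ 2))
        + (if (1 : EReal) < y then eexp θ y else 0) := by
  have hez := Real.exp_pos ‖z‖
  have heθ := Real.exp_pos θ
  have hzn : (0 : ℝ) ≤ ‖z‖ := norm_nonneg z
  have hC1 : 1 ≤ Cb θ z := by unfold Cb; nlinarith
  have hC0 : 0 ≤ Cb θ z := le_trans zero_le_one hC1
  have hθz : θ ≤ ‖z‖ := by
    rw [← hz]
    exact le_trans (le_abs_self _) (Complex.abs_re_le_norm z)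
  by_cases hb : y = ⊥
  · subst hb
    have h1 : cexpE z ⊥ - 1 - z * ((xIn ⊥ : ℝ) : ℂ) = -1 := by
      simp [cexpE, xIn]
    rw [h1, if_pos rfl, if_neg (by simp : ¬ (1 : EReal) < ⊥), add_zero, mul_one]
    simpa using ENNReal.ofReal_le_ofReal hC1
  · set t := y.toReal with ht
    have hc : cexpE z y = Complex.exp (z * (t : ℂ)) := if_neg hb
    have hnorm : ‖Complex.exp (z * (t : ℂ))‖ = Real.exp (θ * t) := by rw [norm_cexp, hz]
    by_cases h1 : |t| < 1
    · -- small |t| : quadratic bound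
      have hxin : xIn y = t := if_pos ⟨hb, h1⟩
      have ht2 : t ^ 2 ≤ 1 := by nlinarith [sq_abs t, abs_nonneg t]
      have hinf : (1 : ℝ≥0∞) ⊓ ENNReal.ofReal (t ^ 2) = ENNReal.ofReal (t ^ 2) :=
        inf_eq_right.mpr (ENNReal.ofReal_le_one.mpr ht2)
      rw [if_neg hb, hinf, hc, hxin]
      refine le_add_right ?_
      rw [← ENNReal.ofReal_mul hC0]
      refine ENNReal.ofReal_le_ofReal ?_
      have hnz : ‖z * (t : ℂ)‖ = ‖z‖ * |t| := by
        rw [norm_mul, Complex.norm_real, Real.norm_eq_abs]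
      by_cases h2 : ‖z * (t : ℂ)‖ ≤ 1
      · have hbd := Complex.norm_exp_sub_one_sub_id_le
          (x := z * (t : ℂ)) h2
        have : ‖z * (t : ℂ)‖ ^ 2 = ‖z‖ ^ 2 * t ^ 2 := by
          rw [hnz]; nlinarith [sq_abs t]
        rw [this] at hbd
        refine le_trans hbd ?_
        unfold Cb
        nlinarith [sq_nonneg t, sq_nonneg ‖z‖, mul_nonneg (mul_nonneg hzn hzn) (sq_nonneg t)]
      · push_neg at h2
        rw [hnz] at h2
        have hb1 : ‖Complex.exp (z * (t : ℂ)) - 1 - z * (t : ℂ)‖ ≤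
            Real.exp (θ * t) + 1 + ‖z‖ * |t| := by
          calc ‖Complex.exp (z * (t : ℂ)) - 1 - z * (t : ℂ)‖
              ≤ ‖Complex.exp (z * (t : ℂ)) - 1‖ + ‖z * (t : ℂ)‖ := norm_sub_le _ _
            _ ≤ (‖Complex.exp (z * (t : ℂ))‖ + ‖(1 : ℂ)‖) + ‖z‖ * |t| := by
                rw [hnz]
                exact add_le_add_left (norm_sub_le _ _) _
            _ = Real.exp (θ * t) + 1 + ‖z‖ * |t| := by rw [hnorm, norm_one]
        refine le_trans hb1 ?_
        have habs : 0 ≤ |t| := abs_nonneg t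
        have hθt : Real.exp (θ * t) ≤ Real.exp ‖z‖ := by
          apply Real.exp_le_exp.mpr
          nlinarith [le_abs_self t]
        have hsq : 1 ≤ ‖z‖ ^ 2 * t ^ 2 := by nlinarith [sq_abs t]
        unfold Cb
        nlinarith [sq_abs t, mul_le_of_le_one_right hzn (le_of_lt h1),
          mul_nonneg (mul_nonneg hzn hzn) (sq_nonneg t)]
    · -- |t| ≥ 1
      push_neg at h1
      have hxin : xIn y = 0 := if_neg fun h => absurd h.2 (not_lt.mpr h1)
      have ht2 : (1 : ℝ) ≤ t ^ 2 := by nlinarith [sq_abs t, abs_nonneg t]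
      have hinf : (1 : ℝ≥0∞) ⊓ ENNReal.ofReal (t ^ 2) = 1 :=
        inf_eq_left.mpr (ENNReal.one_le_ofReal.mpr ht2)
      have h0 : cexpE z y - 1 - z * ((xIn y : ℝ) : ℂ) = Complex.exp (z * (t : ℂ)) - 1 := by
        rw [hc, hxin]; push_cast; ring
      have hb2 : ‖Complex.exp (z * (t : ℂ)) - 1‖ ≤ Real.exp (θ * t) + 1 := by
        calc ‖Complex.exp (z * (t : ℂ)) - 1‖
            ≤ ‖Complex.exp (z * (t : ℂ))‖ + ‖(1 : ℂ)‖ := norm_sub_le _ _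
          _ = Real.exp (θ * t) + 1 := by rw [hnorm, norm_one]
      rw [h0, if_neg hb, hinf, mul_one]
      by_cases h4 : (1 : EReal) < y
      · rw [if_pos h4, eexp, if_neg hb, ← ht]
        calc ENNReal.ofReal ‖Complex.exp (z * (t : ℂ)) - 1‖
            ≤ ENNReal.ofReal (Real.exp (θ * t) + 1) := ENNReal.ofReal_le_ofReal hb2
          _ = ENNReal.ofReal 1 + ENNReal.ofReal (Real.exp (θ * t)) := by
              rw [ENNReal.ofReal_add (Real.exp_pos _).le zero_le_one, add_comm]
          _ ≤ ENNReal.ofReal (Cb θ z) + ENNReal.ofReal (Real.exp (θ * t)) :=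
              add_le_add_left (ENNReal.ofReal_le_ofReal hC1) _
      · rw [if_neg h4, add_zero]
        have hyt : y ≠ ⊤ := by
          rintro rfl
          rw [ht] at h1
          simp only [EReal.toReal_top, abs_zero] at h1
          linarith
        have hle : t ≤ 1 := by
          have hy1 : y ≤ 1 := not_lt.mp h4
          rw [← EReal.coe_toReal hyt hb, ← ht] at hy1
          exact_mod_cast hy1
        refine ENNReal.ofReal_le_ofReal (le_trans hb2 ?_)
        have : Real.exp (θ * t) ≤ Real.exp θ := Real.exp_le_exp.mpr (by nlinarith)
        unfold Cb
        nlinarith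

lemma tail_bound {θ : ℝ} {z : ℂ} (hz : z.re = θ) (x : ℕ → EReal) :
    (‖∑' k, cexpE z (x (k + 1))‖₊ : ℝ≥0∞) ≤ ∑' k, eexp θ (x (k + 1)) := by
  have heq : ∀ k : ℕ, eexp θ (x (k + 1)) = ENNReal.ofReal ‖cexpE z (x (k + 1))‖ :=
    fun k => eexp_eq_ofReal_norm hz _
  by_cases hs : Summable fun k : ℕ => ‖cexpE z (x (k + 1))‖
  · calc (‖∑' k, cexpE z (x (k + 1))‖₊ : ℝ≥0∞)
        = ENNReal.ofReal ‖∑' k, cexpE z (x (k + 1))‖ := (ofReal_norm _).symm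
      _ ≤ ENNReal.ofReal (∑' k, ‖cexpE z (x (k + 1))‖) :=
          ENNReal.ofReal_le_ofReal (norm_tsum_le_tsum_norm hs)
      _ = ∑' k, ENNReal.ofReal ‖cexpE z (x (k + 1))‖ :=
          ENNReal.ofReal_tsum_of_nonneg (fun k => norm_nonneg _) hs
      _ = ∑' k, eexp θ (x (k + 1)) := by exact tsum_congr fun k => (heq k).symm
  · rw [tsum_eq_zero_of_not_summable fun h => hs (summable_norm_iff.mpr h)]
    simp

end Stmt9Aux

open Stmt9Aux in
/-- for `z ∈ ℂ` with `Re z = θ`,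
`∫ (|e^{z x₁} - 1 - z x₁ 1_{|x₁|<1}| + Σ_{k≥2} e^{θ x_k}) Λ(dx) < ∞`; in particular the
integrand of the cumulant `κ(z)` is `Λ`-integrable, so `κ(z)` is well defined and finite. -/
theorem stmt9 (θ : ℝ) (hθ : 0 ≤ θ) (Λ : Measure calP) [SigmaFinite Λ]
    (h14 : cond14 Λ) (h15 : cond15 θ Λ) (z : ℂ) (hz : z.re = θ) :
    (∫⁻ x : calP,
        (ENNReal.ofReal ‖cexpE z (x.1 0) - 1 - z * (xIn (x.1 0) : ℂ)‖
          + ∑' k, eexp θ (x.1 (k + 1))) ∂Λ < ∞) ∧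
      Integrable (fun x : calP =>
        cexpE z (x.1 0) - 1 - z * (xIn (x.1 0) : ℂ) + ∑' k, cexpE z (x.1 (k + 1))) Λ := by
  classical
  have hmk : ∀ k : ℕ, Measurable fun x : calP => x.1 k := fun k =>
    (measurable_pi_apply k).comp measurable_subtype_coe
  have hm0 := hmk 0
  -- measurability of the (1.4) integrand
  have hI14meas : Measurable fun x : calP =>
      (if x.1 0 = ⊥ then (1 : ℝ≥0∞) else 1 ⊓ ENNReal.ofReal ((x.1 0).toReal ^ 2)) := by
    refine Measurable.ite (hm0 (measurableSet_singleton (⊥ : EReal))) measurable_const ?_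
    exact measurable_const.inf
      (ENNReal.measurable_ofReal.comp ((measurable_ereal_toReal.comp hm0).pow_const 2))
  -- measurability of the (1.5) integrand
  have htail_meas : Measurable fun x : calP => ∑' k, eexp θ (x.1 (k + 1)) :=
    Measurable.ennreal_tsum fun k => (measurable_eexp θ).comp (hmk (k + 1))
  have hI15meas : Measurable fun x : calP =>
      ((if (1 : EReal) < x.1 0 then eexp θ (x.1 0) else 0) + ∑' k, eexp θ (x.1 (k + 1))) := by
    refine Measurable.add ?_ htail_meas
    exact Measurable.ite (hm0 measurableSet_Ioi)
      ((measurable_eexp θ).comp hm0) measurable_const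
  -- pointwise bound
  have key1 : ∀ x : calP,
      ENNReal.ofReal ‖cexpE z (x.1 0) - 1 - z * (xIn (x.1 0) : ℂ)‖
          + ∑' k, eexp θ (x.1 (k + 1)) ≤
        ENNReal.ofReal (Cb θ z) *
            (if x.1 0 = ⊥ then 1 else 1 ⊓ ENNReal.ofReal ((x.1 0).toReal ^ 2))
          + ((if (1 : EReal) < x.1 0 then eexp θ (x.1 0) else 0)
              + ∑' k, eexp θ (x.1 (k + 1))) := by
    intro x
    rw [← add_assoc]
    exact add_le_add_left (key hθ hz (x.1 0)) _
  -- Part 1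
  have hpart1 : ∫⁻ x : calP,
      (ENNReal.ofReal ‖cexpE z (x.1 0) - 1 - z * (xIn (x.1 0) : ℂ)‖
        + ∑' k, eexp θ (x.1 (k + 1))) ∂Λ < ∞ := by
    calc ∫⁻ x : calP,
        (ENNReal.ofReal ‖cexpE z (x.1 0) - 1 - z * (xIn (x.1 0) : ℂ)‖
          + ∑' k, eexp θ (x.1 (k + 1))) ∂Λ
        ≤ ∫⁻ x : calP, (ENNReal.ofReal (Cb θ z) *
              (if x.1 0 = ⊥ then 1 else 1 ⊓ ENNReal.ofReal ((x.1 0).toReal ^ 2))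
            + ((if (1 : EReal) < x.1 0 then eexp θ (x.1 0) else 0)
                + ∑' k, eexp θ (x.1 (k + 1)))) ∂Λ := lintegral_mono key1
      _ = ENNReal.ofReal (Cb θ z) * ∫⁻ x : calP,
            (if x.1 0 = ⊥ then 1 else 1 ⊓ ENNReal.ofReal ((x.1 0).toReal ^ 2)) ∂Λ
          + ∫⁻ x : calP, ((if (1 : EReal) < x.1 0 then eexp θ (x.1 0) else 0)
              + ∑' k, eexp θ (x.1 (k + 1))) ∂Λ := by
          rw [lintegral_add_left (hI14meas.const_mul _), lintegral_const_mul _ hI14meas]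
      _ < ∞ := ENNReal.add_lt_top.mpr
          ⟨ENNReal.mul_lt_top ENNReal.ofReal_lt_top h14, h15⟩
  refine ⟨hpart1, ?_, ?_⟩
  · -- a.e. strong measurability
    have hA : Measurable fun x : calP =>
        cexpE z (x.1 0) - 1 - z * (xIn (x.1 0) : ℂ) := by
      refine Measurable.sub (Measurable.sub ?_ measurable_const) ?_
      · exact (measurable_cexpE z).comp hm0
      · exact measurable_const.mul
          (Complex.measurable_ofReal.comp (measurable_xIn.comp hm0))
    have haesum : ∀ᵐ x ∂Λ, Summable fun k : ℕ => cexpE z (x.1 (k + 1)) := by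
      have hae := ae_lt_top hI15meas h15.ne
      filter_upwards [hae] with x hx
      have h1 : (∑' k, eexp θ (x.1 (k + 1))) ≠ ⊤ :=
        ne_top_of_lt (lt_of_le_of_lt le_add_self hx)
      have h2 : (∑' k, ENNReal.ofReal ‖cexpE z (x.1 (k + 1))‖) ≠ ⊤ := by
        rwa [tsum_congr fun k => (eexp_eq_ofReal_norm hz (x.1 (k + 1)) : _)] at h1
      have h3 := ENNReal.summable_toReal h2
      have h4 : Summable fun k : ℕ => ‖cexpE z (x.1 (k + 1))‖ := by
        refine h3.congr fun k => ?_
        exact ENNReal.toReal_ofReal (norm_nonneg _)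
      exact summable_norm_iff.mp h4
    have hSaem : AEMeasurable (fun x : calP => ∑' k, cexpE z (x.1 (k + 1))) Λ := by
      refine aemeasurable_of_tendsto_metrizable_ae atTop
        (f := fun n (x : calP) => ∑ k ∈ Finset.range n, cexpE z (x.1 (k + 1)))
        (fun n => (Finset.measurable_sum _ fun k _ =>
          (measurable_cexpE z).comp (hmk (k + 1))).aemeasurable) ?_
      filter_upwards [haesum] with x hx
      exact hx.hasSum.tendsto_sum_nat
    exact (hA.aemeasurable.add hSaem).aestronglyMeasurable
  · -- finite integral
    refine lt_of_le_of_lt (lintegral_mono fun x => ?_) hpart1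
    calc (‖cexpE z (x.1 0) - 1 - z * (xIn (x.1 0) : ℂ)
            + ∑' k, cexpE z (x.1 (k + 1))‖₊ : ℝ≥0∞)
        ≤ (‖cexpE z (x.1 0) - 1 - z * (xIn (x.1 0) : ℂ)‖₊ : ℝ≥0∞)
            + (‖∑' k, cexpE z (x.1 (k + 1))‖₊ : ℝ≥0∞) := by
          exact_mod_cast nnnorm_add_le _ _
      _ ≤ ENNReal.ofReal ‖cexpE z (x.1 0) - 1 - z * (xIn (x.1 0) : ℂ)‖
            + ∑' k, eexp θ (x.1 (k + 1)) :=
          add_le_add (le_of_eq (ofReal_norm _).symm) (tail_bound hz _)
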